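/- Let α ∈ ℝ, p ∈ ℂ, r > 0, and let u be analytic on the punctured disc {z ∈ ℂ : 0 < |z − p| < r} and satisfy u''(z) = 2u(z)³ + z·u(z) − α there, with a simple pole at p of residue −1, i.e. (z − p)·u(z) → −1 as z → p. Then the function f(z) := 2u(z)² − 2u'(z) + z extends to a function F analytic at p with a simple zero there: F(p) = 0 and F'(p) = −(2α + 1); equivalently, f(z) = −(2α+1)(z − p) + O((z − p)²) as z → p. -/

import Mathlib

open Filter Topology Set Metric

/-- The auxiliary function `f(z) = 2 u(z)^2 - 2 u'(z) + z` appearing in the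
Bäcklund transformation for Painlevé II, in the complex setting. -/
noncomputable def piiFC (u : ℂ → ℂ) : ℂ → ℂ :=
  fun z => 2 * (u z) ^ 2 - 2 * deriv u z + z

private lemma analyticAt_deriv' {f : ℂ → ℂ} {x : ℂ} (h : AnalyticAt ℂ f x) :
    AnalyticAt ℂ (deriv f) x := by
  have h1 : AnalyticAt ℂ (fun z => fderiv ℂ f z 1) x :=
    ((ContinuousLinearMap.apply ℂ ℂ (1 : ℂ)).analyticAt _).comp h.fderiv
  exact h1.congr (Filter.Eventually.of_forall fun z => fderiv_apply_one_eq_deriv)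

private lemma analyticAt_dslope' {f : ℂ → ℂ} {x : ℂ} (h : AnalyticAt ℂ f x) :
    AnalyticAt ℂ (dslope f x) x := by
  obtain ⟨P, hP⟩ := h
  exact ⟨P.fslope, hP.has_fpower_series_dslope_fslope⟩

/-- if `u` solves Painlevé II on a punctured disc around `p`
with a simple pole of residue `-1` at `p`, then `f = 2 u^2 - 2 u' + z`
extends to a function `F` analytic at `p` with a simple zero there:
`F(p) = 0` and `F'(p) = -(2α+1)`. -/
theorem piiFC_simple_zero (α : ℝ) (p : ℂ) (r : ℝ) (hr : 0 < r)
    (u : ℂ → ℂ) (hu : AnalyticOnNhd ℂ u (ball p r \ {p}))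
    (hPII : ∀ z ∈ ball p r \ {p},
      deriv (deriv u) z = 2 * (u z) ^ 3 + z * u z - (α : ℂ))
    (hpole : Tendsto (fun z => (z - p) * u z) (𝓝[≠] p) (𝓝 (-1))) :
    ∃ F : ℂ → ℂ, AnalyticAt ℂ F p ∧
      (∀ᶠ z in 𝓝[≠] p, F z = piiFC u z) ∧
      F p = 0 ∧ deriv F p = -(2 * (α : ℂ) + 1) := by
  set c : ℂ := 2 * (α : ℂ) + 1 with hcdef
  set h : ℂ → ℂ := Function.update (fun z => (z - p) * u z) p (-1) with hh
  have hne : h =ᶠ[𝓝[≠] p] fun z => (z - p) * u z := by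
    filter_upwards [self_mem_nhdsWithin] with z hz
    exact Function.update_of_ne hz _ _
  have hballp : ball p r ∈ 𝓝 p := ball_mem_nhds p hr
  have hmem : ∀ᶠ z in 𝓝[≠] p, z ∈ ball p r \ {p} := by
    rw [eventually_nhdsWithin_iff]
    filter_upwards [hballp] with z hz hz' using ⟨hz, hz'⟩
  -- Step A : removable singularity for h
  have hA : AnalyticAt ℂ h p := by
    apply Complex.analyticAt_of_differentiable_on_punctured_nhds_of_continuousAt
    · filter_upwards [hmem] with z hz
      have h1 : h =ᶠ[𝓝 z] fun w => (w - p) * u w := by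
        filter_upwards [isOpen_ne.mem_nhds hz.2] with w hw
        exact Function.update_of_ne hw _ _
      exact h1.differentiableAt_iff.mpr
        ((differentiableAt_id.sub_const p).mul (hu z hz).differentiableAt)
    · rw [← continuousWithinAt_compl_self]
      have hval : h p = -1 := Function.update_self _ _ _
      rw [ContinuousWithinAt, hval]
      exact hpole.congr' hne.symm
  have hhp : h p = -1 := Function.update_self _ _ _
  -- Step B : v = dslope h p is analytic, u = v - (z-p)⁻¹ near p
  set v : ℂ → ℂ := dslope h p with hvdef
  have hvA : AnalyticAt ℂ v p := analyticAt_dslope' hA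
  have hvu : ∀ᶠ z in 𝓝[≠] p, u z = v z - (z - p)⁻¹ := by
    filter_upwards [hne, self_mem_nhdsWithin] with z hz hz'
    have hzp : (z : ℂ) ≠ p := hz'
    have hzp0 : z - p ≠ 0 := sub_ne_zero.2 hzp
    have : v z = (h z - h p) / (z - p) := by
      rw [hvdef, dslope_of_ne _ hzp, slope_def_field]
    rw [this, hz, hhp]
    field_simp
    ring
  -- an open neighbourhood t of p on which everything works
  obtain ⟨t, htsub, htopen, htp⟩ :=
    _root_.mem_nhds_iff.mp (inter_mem (inter_mem hballp hvA.eventually_analyticAt)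
      (eventually_nhdsWithin_iff.mp hvu))
  have ht_ball : ∀ z ∈ t, z ∈ ball p r := fun z hz => (htsub hz).1.1
  have ht_vA : ∀ z ∈ t, AnalyticAt ℂ v z := fun z hz => (htsub hz).1.2
  have ht_uv : ∀ z ∈ t, z ≠ p → u z = v z - (z - p)⁻¹ := fun z hz hzp => (htsub hz).2 hzp
  have ht_ev : ∀ᶠ z in 𝓝[≠] p, z ∈ t ∧ z ≠ p := by
    rw [eventually_nhdsWithin_iff]
    filter_upwards [htopen.mem_nhds htp] with z h1 h2 using ⟨h1, h2⟩
  -- G : the analytic part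
  set G : ℂ → ℂ := fun w => 2 * (v w) ^ 2 - 2 * deriv v w + w with hGdef
  have hGA : ∀ z ∈ t, AnalyticAt ℂ G z := by
    intro z hz
    exact ((analyticAt_const.mul ((ht_vA z hz).pow 2)).sub
      (analyticAt_const.mul (analyticAt_deriv' (ht_vA z hz)))).add analyticAt_id
  -- local eventual equality near points of t \ {p}
  have huv_loc : ∀ z ∈ t, z ≠ p → u =ᶠ[𝓝 z] fun w => v w - (w - p)⁻¹ := by
    intro z hzt hzp
    filter_upwards [(htopen.inter isOpen_ne).mem_nhds ⟨hzt, hzp⟩] with w hw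
    exact ht_uv w hw.1 hw.2
  -- derivative of u on t \ {p}
  have hderiv_u : ∀ z ∈ t, z ≠ p → deriv u z = deriv v z + ((z - p) ^ 2)⁻¹ := by
    intro z hzt hzp
    have hzp0 : z - p ≠ 0 := sub_ne_zero.2 hzp
    have hvd : HasDerivAt v (deriv v z) z := (ht_vA z hzt).differentiableAt.hasDerivAt
    have hinv : HasDerivAt (fun w => (w - p)⁻¹) (-1 / (z - p) ^ 2) z := by
      simpa [Pi.inv_def] using ((hasDerivAt_id z).sub_const p).inv hzp0
    have := ((hvd.sub hinv).congr_of_eventuallyEq (huv_loc z hzt hzp)).deriv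
    rw [this]
    field_simp
    ring
  -- f in terms of v on t \ {p}
  have hf : ∀ z ∈ t, z ≠ p → piiFC u z = -4 * v z * (z - p)⁻¹ + G z := by
    intro z hzt hzp
    have hzp0 : z - p ≠ 0 := sub_ne_zero.2 hzp
    simp only [piiFC, hGdef]
    rw [ht_uv z hzt hzp, hderiv_u z hzt hzp]
    field_simp
    ring
  -- Riccati identity : f' = -2 u f + c on t \ {p}
  have hfderiv : ∀ z ∈ t, z ≠ p →
      deriv (piiFC u) z = -2 * u z * piiFC u z + c := by
    intro z hzt hzp
    have hzball : z ∈ ball p r \ {p} := ⟨ht_ball z hzt, hzp⟩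
    have huA : AnalyticAt ℂ u z := hu z hzball
    have hud : HasDerivAt u (deriv u z) z := huA.differentiableAt.hasDerivAt
    have hud2 : HasDerivAt (deriv u) (deriv (deriv u) z) z :=
      (analyticAt_deriv' huA).differentiableAt.hasDerivAt
    have hD : HasDerivAt (piiFC u)
        (2 * (2 * u z ^ 1 * deriv u z) - 2 * deriv (deriv u) z + 1) z := by
      have : HasDerivAt (fun w => 2 * (u w) ^ 2 - 2 * deriv u w + w)
          (2 * (2 * u z ^ 1 * deriv u z) - 2 * deriv (deriv u) z + 1) z := by
        simpa [Pi.add_def, Pi.sub_def] using (((hud.pow 2).const_mul 2).sub (hud2.const_mul 2)).add (hasDerivAt_id z)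
      exact this
    rw [hD.deriv, hPII z hzball]
    simp only [piiFC, hcdef]
    ring
  -- limits along the punctured filter
  have hvc : ContinuousAt v p := hvA.continuousAt
  have hv'c : ContinuousAt (deriv v) p := (analyticAt_deriv' hvA).continuousAt
  have hGc : ContinuousAt G p := (hGA p htp).continuousAt
  have hzt0 : Tendsto (fun z : ℂ => z - p) (𝓝[≠] p) (𝓝 0) := by
    have : Tendsto (fun z : ℂ => z - p) (𝓝 p) (𝓝 (p - p)) :=
      (continuous_id.sub continuous_const).continuousAt
    simpa using this.mono_left nhdsWithin_le_nhds
  -- (i) limit of (z-p) f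
  have T1 : Tendsto (fun z => (z - p) * piiFC u z) (𝓝[≠] p) (𝓝 (-4 * v p)) := by
    have heq : ∀ᶠ z in 𝓝[≠] p,
        -4 * v z + (z - p) * G z = (z - p) * piiFC u z := by
      filter_upwards [ht_ev] with z ⟨hzt, hzp⟩
      have hzp0 : z - p ≠ 0 := sub_ne_zero.2 hzp
      rw [hf z hzt hzp]
      field_simp
    have hT : Tendsto (fun z => -4 * v z + (z - p) * G z) (𝓝[≠] p)
        (𝓝 (-4 * v p + 0 * G p)) :=
      ((tendsto_const_nhds.mul (hvc.tendsto.mono_left nhdsWithin_le_nhds)).add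
        (hzt0.mul (hGc.tendsto.mono_left nhdsWithin_le_nhds)))
    simpa using hT.congr' heq
  -- derivative of f in terms of v on t \ {p}
  have hdf : ∀ z ∈ t, z ≠ p → deriv (piiFC u) z =
      -4 * deriv v z * (z - p)⁻¹ + 4 * v z * ((z - p) ^ 2)⁻¹ + deriv G z := by
    intro z hzt hzp
    have hzp0 : z - p ≠ 0 := sub_ne_zero.2 hzp
    have hfe : piiFC u =ᶠ[𝓝 z] fun w => -4 * v w * (w - p)⁻¹ + G w := by
      filter_upwards [(htopen.inter isOpen_ne).mem_nhds ⟨hzt, hzp⟩] with w hw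
      exact hf w hw.1 hw.2
    have hvd : HasDerivAt v (deriv v z) z := (ht_vA z hzt).differentiableAt.hasDerivAt
    have hinv : HasDerivAt (fun w => (w - p)⁻¹) (-1 / (z - p) ^ 2) z := by
      simpa [Pi.inv_def] using ((hasDerivAt_id z).sub_const p).inv hzp0
    have hGd : HasDerivAt G (deriv G z) z := (hGA z hzt).differentiableAt.hasDerivAt
    have hprod : HasDerivAt (fun w => -4 * v w * (w - p)⁻¹ + G w)
        ((-4 * deriv v z) * (z - p)⁻¹ + (-4 * v z) * (-1 / (z - p) ^ 2) + deriv G z) z :=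
      (((hvd.const_mul (-4)).mul hinv).add hGd)
    rw [hfe.deriv_eq, hprod.deriv]
    field_simp
  have hG'c : ContinuousAt (deriv G) p := (analyticAt_deriv' (hGA p htp)).continuousAt
  -- (ii) limit of (z-p)^2 f' computed two ways : v p = 0
  have hvp : v p = 0 := by
    have T2 : Tendsto (fun z => (z - p) ^ 2 * deriv (piiFC u) z) (𝓝[≠] p)
        (𝓝 (4 * v p)) := by
      have heq : ∀ᶠ z in 𝓝[≠] p,
          -4 * (z - p) * deriv v z + 4 * v z + (z - p) ^ 2 * deriv G z
            = (z - p) ^ 2 * deriv (piiFC u) z := by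
        filter_upwards [ht_ev] with z ⟨hzt, hzp⟩
        have hzp0 : z - p ≠ 0 := sub_ne_zero.2 hzp
        rw [hdf z hzt hzp]
        field_simp
      have hT : Tendsto
          (fun z => -4 * (z - p) * deriv v z + 4 * v z + (z - p) ^ 2 * deriv G z)
          (𝓝[≠] p) (𝓝 (-4 * 0 * deriv v p + 4 * v p + 0 ^ 2 * deriv G p)) := by
        refine Tendsto.add (Tendsto.add ?_ ?_) ?_
        · exact (tendsto_const_nhds.mul hzt0).mul (hv'c.tendsto.mono_left nhdsWithin_le_nhds)
        · exact tendsto_const_nhds.mul (hvc.tendsto.mono_left nhdsWithin_le_nhds)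
        · exact (hzt0.pow 2).mul (hG'c.tendsto.mono_left nhdsWithin_le_nhds)
      simpa using hT.congr' heq
    have T3 : Tendsto (fun z => (z - p) ^ 2 * deriv (piiFC u) z) (𝓝[≠] p)
        (𝓝 (-2 * -1 * (-4 * v p) + c * 0 ^ 2)) := by
      have heq : ∀ᶠ z in 𝓝[≠] p,
          -2 * ((z - p) * u z) * ((z - p) * piiFC u z) + c * (z - p) ^ 2
            = (z - p) ^ 2 * deriv (piiFC u) z := by
        filter_upwards [ht_ev] with z ⟨hzt, hzp⟩
        rw [hfderiv z hzt hzp]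
        ring
      have hT : Tendsto
          (fun z => -2 * ((z - p) * u z) * ((z - p) * piiFC u z) + c * (z - p) ^ 2)
          (𝓝[≠] p) (𝓝 (-2 * -1 * (-4 * v p) + c * 0 ^ 2)) :=
        ((tendsto_const_nhds.mul hpole).mul T1).add (tendsto_const_nhds.mul (hzt0.pow 2))
      exact hT.congr' heq
    have h12 : (4 : ℂ) * v p = -2 * -1 * (-4 * v p) + c * 0 ^ 2 :=
      tendsto_nhds_unique T2 T3
    have : (12 : ℂ) * v p = 0 := by linear_combination h12
    simpa using this
  -- the analytic extension F
  set F : ℂ → ℂ := fun z => -4 * dslope v p z + G z with hFdef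
  have hFA : AnalyticAt ℂ F p :=
    (analyticAt_const.mul (analyticAt_dslope' hvA)).add (hGA p htp)
  have hFf : ∀ z ∈ t, z ≠ p → F z = piiFC u z := by
    intro z hzt hzp
    have hzp0 : z - p ≠ 0 := sub_ne_zero.2 hzp
    have hds : dslope v p z = v z * (z - p)⁻¹ := by
      rw [dslope_of_ne _ hzp, slope_def_field, hvp, sub_zero, div_eq_mul_inv]
    rw [hFdef]
    simp only
    rw [hds, hf z hzt hzp]
    ring
  have hFev : ∀ᶠ z in 𝓝[≠] p, F z = piiFC u z := by
    filter_upwards [ht_ev] with z ⟨hzt, hzp⟩ using hFf z hzt hzp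
  have hdFf : ∀ z ∈ t, z ≠ p → deriv (piiFC u) z = deriv F z := by
    intro z hzt hzp
    have hfe : piiFC u =ᶠ[𝓝 z] F := by
      filter_upwards [(htopen.inter isOpen_ne).mem_nhds ⟨hzt, hzp⟩] with w hw
      exact (hFf w hw.1 hw.2).symm
    exact hfe.deriv_eq
  have hFc : ContinuousAt F p := hFA.continuousAt
  have hF'c : ContinuousAt (deriv F) p := (analyticAt_deriv' hFA).continuousAt
  -- F p = 0
  have hFp : F p = 0 := by
    have T4 : Tendsto (fun z => (z - p) * deriv (piiFC u) z) (𝓝[≠] p)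
        (𝓝 (0 * deriv F p)) := by
      have heq : ∀ᶠ z in 𝓝[≠] p,
          (z - p) * deriv F z = (z - p) * deriv (piiFC u) z := by
        filter_upwards [ht_ev] with z ⟨hzt, hzp⟩
        rw [hdFf z hzt hzp]
      exact (hzt0.mul (hF'c.tendsto.mono_left nhdsWithin_le_nhds)).congr' heq
    have T5 : Tendsto (fun z => (z - p) * deriv (piiFC u) z) (𝓝[≠] p)
        (𝓝 (-2 * -1 * F p + c * 0)) := by
      have heq : ∀ᶠ z in 𝓝[≠] p,
          -2 * ((z - p) * u z) * F z + c * (z - p)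
            = (z - p) * deriv (piiFC u) z := by
        filter_upwards [ht_ev] with z ⟨hzt, hzp⟩
        rw [hfderiv z hzt hzp, ← hFf z hzt hzp]
        ring
      exact (((tendsto_const_nhds.mul hpole).mul
        (hFc.tendsto.mono_left nhdsWithin_le_nhds)).add
        (tendsto_const_nhds.mul hzt0)).congr' heq
    have := tendsto_nhds_unique T4 T5
    have h2 : (2 : ℂ) * F p = 0 := by linear_combination -this
    simpa using h2
  -- deriv F p = -c
  have hFz : ∀ z, F z = (z - p) * dslope F p z := by
    intro z
    have := sub_smul_dslope F p z
    rw [smul_eq_mul, hFp, sub_zero] at this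
    exact this.symm
  have hdsc : Tendsto (dslope F p) (𝓝[≠] p) (𝓝 (deriv F p)) := by
    have : ContinuousAt (dslope F p) p :=
      continuousAt_dslope_same.mpr hFA.differentiableAt
    have h2 : Tendsto (dslope F p) (𝓝[≠] p) (𝓝 (dslope F p p)) :=
      this.tendsto.mono_left nhdsWithin_le_nhds
    rwa [dslope_same] at h2
  have hdFp : deriv F p = -c := by
    have T6 : Tendsto (fun z => deriv (piiFC u) z) (𝓝[≠] p) (𝓝 (deriv F p)) := by
      have heq : ∀ᶠ z in 𝓝[≠] p, deriv F z = deriv (piiFC u) z := by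
        filter_upwards [ht_ev] with z ⟨hzt, hzp⟩ using (hdFf z hzt hzp).symm
      exact (hF'c.tendsto.mono_left nhdsWithin_le_nhds).congr' heq
    have T7 : Tendsto (fun z => deriv (piiFC u) z) (𝓝[≠] p)
        (𝓝 (-2 * -1 * deriv F p + c)) := by
      have heq : ∀ᶠ z in 𝓝[≠] p,
          -2 * ((z - p) * u z) * dslope F p z + c = deriv (piiFC u) z := by
        filter_upwards [ht_ev] with z ⟨hzt, hzp⟩
        rw [hfderiv z hzt hzp, ← hFf z hzt hzp, hFz z]
        ring
      exact (((tendsto_const_nhds.mul hpole).mul hdsc).add tendsto_const_nhds).congr' heq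
    have := tendsto_nhds_unique T6 T7
    linear_combination -this
  exact ⟨F, hFA, hFev, hFp, by rw [hdFp]⟩
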